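/- For all integers n ≥ k ≥ 1, Σ_{m=k}^{n} S_2(n,m) S_2(m,k) = (1/k!) Σ_{n_1+⋯+n_k=n, each n_i ≥ 1} (n! / (n_1! ⋯ n_k!)) B_{n_1} ⋯ B_{n_k}, where the sum on the right runs over all ordered k-tuples of positive integers summing to n. -/

import Mathlib

open Finset

/-- The degenerate falling factorial `(x)_{n,λ} = x(x−λ)⋯(x−(n−1)λ)`;
for `lam = 1` it is the ordinary falling factorial `(x)_n`. -/
noncomputable def dff (lam : ℝ) (n : ℕ) (x : ℝ) : ℝ :=
  ∏ i ∈ Finset.range n, (x - i * lam)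

/-- The degenerate exponential `e_λ^x(t) = Σ_{n≥0} (x)_{n,λ} t^n/n!`. -/
noncomputable def degExp (lam x : ℝ) : PowerSeries ℝ :=
  PowerSeries.mk fun n => dff lam n x / n.factorial

/-- The degenerate logarithm `log_λ(1+t) = Σ_{n≥1} λ^{n−1}(1)_{n,1/λ} t^n/n!`. -/
noncomputable def degLog (lam : ℝ) : PowerSeries ℝ :=
  PowerSeries.mk fun n =>
    if n = 0 then 0 else lam ^ (n - 1) * dff (1 / lam) n 1 / n.factorial

/-- Composition `f(g(t))` of formal power series (valid definition of composition
when `g` has zero constant term, as in all uses below). -/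
noncomputable def pscomp (f g : PowerSeries ℝ) : PowerSeries ℝ :=
  PowerSeries.mk fun n =>
    ∑ k ∈ Finset.range (n + 1), (PowerSeries.coeff k f) * (PowerSeries.coeff n (g ^ k))

namespace StirlingAux

open PowerSeries

lemma coeff_pscomp (f g : PowerSeries ℝ) (n : ℕ) :
    coeff n (pscomp f g) =
      ∑ k ∈ Finset.range (n + 1), (coeff k f) * (coeff n (g ^ k)) := by
  simp [pscomp]

lemma coeff_pow_eq_zero {g : PowerSeries ℝ} (hg : constantCoeff g = 0) {n m : ℕ}
    (h : n < m) : coeff n (g ^ m) = 0 := by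
  have hX : (X : ℝ⟦X⟧) ^ m ∣ g ^ m := pow_dvd_pow_of_dvd (X_dvd_iff.mpr hg) m
  exact X_pow_dvd_iff.mp hX n h

lemma triangle_sum (n : ℕ) (F : ℕ → ℕ → ℝ) (hF : ∀ a b, n < a + b → F a b = 0) :
    ∑ k ∈ range (n+1), ∑ p ∈ Finset.HasAntidiagonal.antidiagonal k, F p.1 p.2
      = ∑ a ∈ range (n+1), ∑ b ∈ range (n+1), F a b := by
  have h1 : ∀ a ∈ range (n+1), ∑ b ∈ range (n+1), F a b = ∑ b ∈ range (n+1-a), F a b := by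
    intro a ha
    rw [mem_range] at ha
    refine (Finset.sum_subset ?_ ?_).symm
    · intro b hb; rw [mem_range] at hb ⊢; omega
    · intro b _ hb; rw [mem_range] at hb; exact hF a b (by omega)
  rw [Finset.sum_congr rfl h1]
  rw [Finset.sum_sigma' (range (n+1)) (fun k => Finset.HasAntidiagonal.antidiagonal k) (fun k p => F p.1 p.2)]
  rw [Finset.sum_sigma' (range (n+1)) (fun a => range (n+1-a)) (fun a b => F a b)]
  apply Finset.sum_nbij' (fun p => (⟨p.2.1, p.2.2⟩ : (_ : ℕ) × ℕ))
    (fun p => ⟨p.1 + p.2, p.1, p.2⟩)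
  · rintro ⟨k, a, b⟩ h
    simp only [Finset.mem_sigma, Finset.mem_range, Finset.HasAntidiagonal.mem_antidiagonal] at h ⊢
    omega
  · rintro ⟨a, b⟩ h
    simp only [Finset.mem_sigma, Finset.mem_range, Finset.HasAntidiagonal.mem_antidiagonal] at h ⊢
    exact ⟨by omega, trivial⟩
  · rintro ⟨k, a, b⟩ h
    simp only [Finset.mem_sigma, Finset.mem_range, Finset.HasAntidiagonal.mem_antidiagonal] at h
    simp [h.2]
  · rintro ⟨a, b⟩ h; rfl
  · rintro ⟨k, a, b⟩ h; rfl

lemma pscomp_mul (f₁ f₂ g : PowerSeries ℝ) (hg : constantCoeff g = 0) :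
    pscomp (f₁ * f₂) g = pscomp f₁ g * pscomp f₂ g := by
  ext n
  rw [coeff_pscomp, coeff_mul]
  have lhs : ∑ k ∈ range (n + 1), (coeff k (f₁ * f₂)) * (coeff n (g ^ k))
      = ∑ k ∈ range (n+1), ∑ p ∈ Finset.HasAntidiagonal.antidiagonal k,
          coeff p.1 f₁ * coeff p.2 f₂ * coeff n (g ^ (p.1 + p.2)) := by
    refine Finset.sum_congr rfl fun k _ => ?_
    rw [coeff_mul, Finset.sum_mul]
    refine Finset.sum_congr rfl fun p hp => ?_
    rw [Finset.HasAntidiagonal.mem_antidiagonal] at hp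
    rw [hp]
  rw [lhs, triangle_sum n
      (fun a b => coeff a f₁ * coeff b f₂ * coeff n (g ^ (a + b)))
      (by intro a b hab; rw [coeff_pow_eq_zero hg hab, mul_zero])]
  have rhs : ∀ p ∈ Finset.HasAntidiagonal.antidiagonal n,
      coeff p.1 (pscomp f₁ g) * coeff p.2 (pscomp f₂ g)
        = ∑ a ∈ range (n+1), ∑ b ∈ range (n+1),
            coeff a f₁ * coeff b f₂ * (coeff p.1 (g ^ a) * coeff p.2 (g ^ b)) := by
    intro p hp
    rw [Finset.HasAntidiagonal.mem_antidiagonal] at hp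
    rw [coeff_pscomp, coeff_pscomp]
    have e1 : ∑ a ∈ range (p.1 + 1), (coeff a f₁) * (coeff p.1 (g ^ a))
        = ∑ a ∈ range (n+1), (coeff a f₁) * (coeff p.1 (g ^ a)) := by
      refine Finset.sum_subset (fun a ha => ?_) (fun a _ ha => ?_)
      · rw [mem_range] at ha ⊢; omega
      · rw [mem_range] at ha
        rw [coeff_pow_eq_zero hg (by omega), mul_zero]
    have e2 : ∑ b ∈ range (p.2 + 1), (coeff b f₂) * (coeff p.2 (g ^ b))
        = ∑ b ∈ range (n+1), (coeff b f₂) * (coeff p.2 (g ^ b)) := by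
      refine Finset.sum_subset (fun b hb => ?_) (fun b _ hb => ?_)
      · rw [mem_range] at hb ⊢; omega
      · rw [mem_range] at hb
        rw [coeff_pow_eq_zero hg (by omega), mul_zero]
    rw [e1, e2, Finset.sum_mul_sum]
    refine Finset.sum_congr rfl fun a _ => Finset.sum_congr rfl fun b _ => by ring
  rw [Finset.sum_congr rfl rhs]
  symm
  rw [Finset.sum_comm]
  refine Finset.sum_congr rfl fun a _ => ?_
  rw [Finset.sum_comm]
  refine Finset.sum_congr rfl fun b _ => ?_
  rw [← Finset.mul_sum, ← coeff_mul, ← pow_add]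

lemma pscomp_one (g : PowerSeries ℝ) : pscomp 1 g = 1 := by
  ext n
  rw [coeff_pscomp]
  rw [Finset.sum_eq_single 0 (fun l hl hne => by rw [coeff_one, if_neg hne, zero_mul])
    (fun h => absurd (mem_range.mpr (by omega)) h)]
  simp

lemma pscomp_pow (f g : PowerSeries ℝ) (hg : constantCoeff g = 0) (k : ℕ) :
    pscomp (f ^ k) g = (pscomp f g) ^ k := by
  induction k with
  | zero => rw [pow_zero, pow_zero, pscomp_one]
  | succ k ih => rw [pow_succ, pow_succ, pscomp_mul _ _ _ hg, ih]

noncomputable def sA : PowerSeries ℝ := PowerSeries.exp ℝ - 1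

lemma constantCoeff_sA : constantCoeff sA = 0 := by
  simp [sA, constantCoeff_exp]

lemma coeff_exp_pow (j n : ℕ) : coeff n (PowerSeries.exp ℝ ^ j) = (j : ℝ) ^ n / n.factorial := by
  rw [exp_pow_eq_rescale_exp, coeff_rescale, coeff_exp]
  simp [div_eq_mul_inv]

lemma dff_nat (l j : ℕ) : dff 1 l (j : ℝ) = (j.descFactorial l : ℝ) := by
  induction l with
  | zero => simp [dff]
  | succ l ih =>
    rw [dff, Finset.prod_range_succ, ← dff, ih, Nat.descFactorial_succ]
    rcases le_or_gt l j with h | h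
    · push_cast [h]
      ring
    · rw [Nat.descFactorial_eq_zero_iff_lt.2 h]
      simp

lemma pow_eq_sum_choose (n j : ℕ) :
    ((j : ℝ)) ^ n / n.factorial
      = ∑ l ∈ range (n + 1), (j.choose l : ℝ) * coeff n (sA ^ l) := by
  have hexp : (PowerSeries.exp ℝ) ^ j = ∑ l ∈ range (j + 1),
      sA ^ l * 1 ^ (j - l) * ((j.choose l : ℕ) : ℝ⟦X⟧) := by
    rw [← add_pow]
    congr 1
    rw [sA]; ring
  have h1 : ((j : ℝ)) ^ n / n.factorial
      = ∑ l ∈ range (j + 1), (j.choose l : ℝ) * coeff n (sA ^ l) := by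
    rw [← coeff_exp_pow j n, hexp, map_sum]
    refine Finset.sum_congr rfl fun l _ => ?_
    rw [one_pow, mul_one, show ((j.choose l : ℕ) : ℝ⟦X⟧) = PowerSeries.C (j.choose l : ℝ) by
      simp, PowerSeries.coeff_mul_C]
    ring
  rw [h1]
  have h2 : ∀ (N : ℕ), j + 1 ≤ N →
      ∑ l ∈ range (j + 1), (j.choose l : ℝ) * coeff n (sA ^ l)
        = ∑ l ∈ range N, (j.choose l : ℝ) * coeff n (sA ^ l) := by
    intro N hN
    refine Finset.sum_subset (fun l hl => ?_) (fun l _ hl => ?_)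
    · rw [mem_range] at hl ⊢; omega
    · rw [mem_range] at hl
      rw [Nat.choose_eq_zero_of_lt (by omega)]
      simp
  have h3 : ∑ l ∈ range (n + 1), (j.choose l : ℝ) * coeff n (sA ^ l)
      = ∑ l ∈ range (j + n + 2), (j.choose l : ℝ) * coeff n (sA ^ l) := by
    refine Finset.sum_subset (fun l hl => ?_) (fun l _ hl => ?_)
    · rw [mem_range] at hl ⊢; omega
    · rw [mem_range] at hl
      rw [coeff_pow_eq_zero constantCoeff_sA (by omega)]
      ring
  rw [h2 (j + n + 2) (by omega), h3]

noncomputable def sS (n m : ℕ) : ℝ := (n.factorial : ℝ) / m.factorial * coeff n (sA ^ m)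

lemma sS_spec (n j : ℕ) :
    ((j : ℝ)) ^ n = ∑ l ∈ range (n + 1), sS n l * (j.descFactorial l : ℝ) := by
  have h := pow_eq_sum_choose n j
  have h' : ((j : ℝ)) ^ n
      = n.factorial * ∑ l ∈ range (n + 1), (j.choose l : ℝ) * coeff n (sA ^ l) := by
    rw [← h]
    field_simp
  rw [h', Finset.mul_sum]
  refine Finset.sum_congr rfl fun l _ => ?_
  rw [sS, Nat.descFactorial_eq_factorial_mul_choose]
  have hl : (l.factorial : ℝ) ≠ 0 := Nat.cast_ne_zero.mpr l.factorial_ne_zero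
  push_cast
  field_simp

lemma S2_unique (S2 : ℕ → ℕ → ℝ)
    (hS2 : ∀ (n : ℕ) (x : ℝ), x ^ n = ∑ m ∈ Finset.range (n + 1), S2 n m * dff 1 m x) :
    ∀ n m, m ≤ n → S2 n m = sS n m := by
  intro n
  have key : ∀ j : ℕ, ∑ l ∈ range (n + 1), (S2 n l - sS n l) * (j.descFactorial l : ℝ) = 0 := by
    intro j
    have h1 := hS2 n (j : ℝ)
    rw [Finset.sum_congr rfl (fun l _ => by rw [dff_nat])] at h1
    have h2 := sS_spec n j
    rw [Finset.sum_congr rfl (fun l _ => sub_mul (S2 n l) (sS n l) _), Finset.sum_sub_distrib,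
      ← h1, ← h2, sub_self]
  intro m
  induction m using Nat.strong_induction_on with
  | _ m ih =>
    intro hm
    have h0 := key m
    rw [Finset.sum_eq_single m (fun l hl hne => ?_) (fun hmem => ?_)] at h0
    · rw [Nat.descFactorial_self] at h0
      have hfac : (m.factorial : ℝ) ≠ 0 := Nat.cast_ne_zero.mpr m.factorial_ne_zero
      rcases mul_eq_zero.mp h0 with h | h
      · linarith [sub_eq_zero.mp h]
      · exact absurd h hfac
    · rw [mem_range] at hl
      rcases lt_or_gt_of_ne hne with hlt | hgt
      · rw [ih l hlt (by omega), sub_self, zero_mul]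
      · rw [Nat.descFactorial_eq_zero_iff_lt.2 hgt]
        simp
    · exact absurd (mem_range.mpr (by omega)) hmem

lemma coeff_pow_tuple (φ : PowerSeries ℝ) (k n : ℕ) :
    coeff n (φ ^ k) = ∑ f ∈ Finset.Nat.antidiagonalTuple k n, ∏ i, coeff (f i) φ := by
  have hp : φ ^ k = ∏ _i : Fin k, φ := by
    rw [Finset.prod_const, Finset.card_univ, Fintype.card_fin]
  rw [hp, coeff_prod]
  refine Finset.sum_nbij' (fun l => (l : Fin k → ℕ)) (fun f => Finsupp.equivFunOnFinite.symm f)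
    ?_ ?_ ?_ ?_ ?_
  · intro l hl
    rw [Finset.mem_finsuppAntidiag] at hl
    rw [Finset.Nat.mem_antidiagonalTuple]
    exact hl.1
  · intro f hf
    rw [Finset.Nat.mem_antidiagonalTuple] at hf
    rw [Finset.mem_finsuppAntidiag]
    refine ⟨?_, Finset.subset_univ _⟩
    simpa using hf
  · intro l _; exact Finsupp.equivFunOnFinite.symm_apply_apply l
  · intro f _; exact Finsupp.equivFunOnFinite.apply_symm_apply f
  · intro l _; rfl

end StirlingAux

open StirlingAux PowerSeries

theorem stirling2_composition_bell (S2 : ℕ → ℕ → ℝ) (Bell : ℕ → ℝ)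
    (hS2 : ∀ (n : ℕ) (x : ℝ), x ^ n = ∑ m ∈ Finset.range (n + 1), S2 n m * dff 1 m x)
    (hBell : ∀ n : ℕ, Bell n = ∑ m ∈ Finset.range (n + 1), S2 n m)
    : ∀ n k : ℕ, 1 ≤ k → k ≤ n →
      ∑ m ∈ Finset.Icc k n, S2 n m * S2 m k =
        ((k.factorial : ℝ))⁻¹ *
          ∑ f ∈ (Finset.Nat.antidiagonalTuple k n).filter (fun f => ∀ i, f i ≠ 0),
            (Nat.multinomial Finset.univ f : ℝ) * ∏ i, Bell (f i) := by
  intro n k hk hkn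
  have hS2' := S2_unique S2 hS2
  -- the "Bell" power series  B1 = pscomp sA sA
  set B1 : PowerSeries ℝ := pscomp sA sA with hB1
  have hcoeffB1 : ∀ m : ℕ, coeff m B1 = if m = 0 then 0 else Bell m / m.factorial := by
    intro m
    rw [hB1, coeff_pscomp]
    rcases Nat.eq_zero_or_pos m with rfl | hm
    · simp [sA, coeff_zero_eq_constantCoeff, constantCoeff_exp]
    · rw [if_neg (by omega)]
      have hBm : Bell m = ∑ l ∈ range (m + 1), (m.factorial : ℝ) / l.factorial
          * coeff m (sA ^ l) := by
        rw [hBell m]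
        exact Finset.sum_congr rfl fun l hl => by
          rw [mem_range] at hl
          rw [hS2' m l (by omega), sS]
      rw [hBm, Finset.sum_div]
      refine Finset.sum_congr rfl fun l hl => ?_
      have hmf : (m.factorial : ℝ) ≠ 0 := Nat.cast_ne_zero.mpr m.factorial_ne_zero
      have hlf : (l.factorial : ℝ) ≠ 0 := Nat.cast_ne_zero.mpr l.factorial_ne_zero
      rcases Nat.eq_zero_or_pos l with rfl | hl0
      · rw [pow_zero]
        have : coeff m (1 : ℝ⟦X⟧) = 0 := by
          rw [coeff_one, if_neg (by omega)]
        rw [this]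
        simp
      · have : coeff l sA = (l.factorial : ℝ)⁻¹ := by
          rw [sA, map_sub, coeff_exp, coeff_one, if_neg (by omega)]
          simp
        rw [this]
        field_simp
  -- LHS
  have hL : ∑ m ∈ Finset.Icc k n, S2 n m * S2 m k
      = (n.factorial : ℝ) / k.factorial * coeff n (B1 ^ k) := by
    have e1 : ∑ m ∈ Finset.Icc k n, S2 n m * S2 m k
        = ∑ m ∈ Finset.Icc k n, (n.factorial : ℝ) / k.factorial
            * (coeff m (sA ^ k) * coeff n (sA ^ m)) := by
      refine Finset.sum_congr rfl fun m hm => ?_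
      rw [Finset.mem_Icc] at hm
      rw [hS2' n m hm.2, hS2' m k hm.1, sS, sS]
      have hmf : (m.factorial : ℝ) ≠ 0 := Nat.cast_ne_zero.mpr m.factorial_ne_zero
      field_simp
    rw [e1, ← Finset.mul_sum]
    congr 1
    have e2 : ∑ m ∈ Finset.Icc k n, coeff m (sA ^ k) * coeff n (sA ^ m)
        = ∑ m ∈ range (n + 1), coeff m (sA ^ k) * coeff n (sA ^ m) := by
      refine Finset.sum_subset (fun m hm => ?_) (fun m hm hm' => ?_)
      · rw [Finset.mem_Icc] at hm; rw [mem_range]; omega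
      · rw [mem_range] at hm; rw [Finset.mem_Icc] at hm'
        rw [coeff_pow_eq_zero constantCoeff_sA (show m < k by omega), zero_mul]
    rw [e2, ← coeff_pscomp, pscomp_pow _ _ constantCoeff_sA k, ← hB1]
  rw [hL, coeff_pow_tuple]
  -- RHS : restrict the sum to positive tuples
  have e3 : ∑ f ∈ Finset.Nat.antidiagonalTuple k n, ∏ i, coeff (f i) B1
      = ∑ f ∈ (Finset.Nat.antidiagonalTuple k n).filter (fun f => ∀ i, f i ≠ 0),
          ∏ i, Bell (f i) / (f i).factorial := by
    rw [Finset.sum_filter]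
    refine Finset.sum_congr rfl fun f _ => ?_
    by_cases hf : ∀ i, f i ≠ 0
    · rw [if_pos hf]
      refine Finset.prod_congr rfl fun i _ => ?_
      rw [hcoeffB1, if_neg (hf i)]
    · rw [if_neg hf]
      push_neg at hf
      obtain ⟨i, hi⟩ := hf
      refine Finset.prod_eq_zero (Finset.mem_univ i) ?_
      rw [hcoeffB1, if_pos hi]
  rw [e3, Finset.mul_sum, Finset.mul_sum]
  refine Finset.sum_congr rfl fun f hf => ?_
  rw [Finset.mem_filter] at hf
  have hsum : ∑ i, f i = n := Finset.Nat.mem_antidiagonalTuple.mp hf.1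
  have hmult : ((Nat.multinomial Finset.univ f : ℕ) : ℝ)
      = (n.factorial : ℝ) / ∏ i, ((f i).factorial : ℝ) := by
    have hspec := Nat.multinomial_spec Finset.univ f
    rw [hsum] at hspec
    have hprod : (∏ i, ((f i).factorial : ℝ)) ≠ 0 :=
      Finset.prod_ne_zero_iff.mpr fun i _ => Nat.cast_ne_zero.mpr (f i).factorial_ne_zero
    field_simp
    rw [mul_comm]
    exact_mod_cast congrArg (Nat.cast : ℕ → ℝ) hspec
  rw [hmult, Finset.prod_div_distrib]
  have hkf : (k.factorial : ℝ) ≠ 0 := Nat.cast_ne_zero.mpr k.factorial_ne_zero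
  have hprod : (∏ i, ((f i).factorial : ℝ)) ≠ 0 :=
    Finset.prod_ne_zero_iff.mpr fun i _ => Nat.cast_ne_zero.mpr (f i).factorial_ne_zero
  field_simp
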